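/- Let g be a positive, symmetric, differentiable density on ℝ, decreasing near +∞, satisfying |(log g)'| ≤ Λ, Ḡ(y) ≍ g(y)y^{κ−1} as y → ∞ for some κ ∈ [1,2], y ↦ (1+y²)g(y) bounded, and g/φ increasing on [0,∞) from (g/φ)(0) < 1 to ∞. Let χ = (Φ̄/Ḡ)^{-1}. Then: (i) for all u ∈ (0,1], χ(u) ≥ Φ̄^{-1}(u·Ḡ(Φ̄^{-1}(u))); (ii) for u small enough, χ(u) ≤ Φ̄^{-1}(u·Ḡ((−2 log u + 4Λ(−log u)^{1/2} + C)^{1/2})) with C = −2 log g(0) − log(2π); (iii) for some constant C' > 0 and u small enough, χ(u) ≥ (−2 log(u·Ḡ(Φ̄^{-1}(u))) − log log(1/u) − C')^{1/2}. -/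

import Mathlib

open MeasureTheory ProbabilityTheory Filter Set
open scoped Classical ENNReal

/-- The standard normal density `φ`. -/
noncomputable def stdphi (x : ℝ) : ℝ := (Real.sqrt (2 * Real.pi))⁻¹ * Real.exp (-(x ^ 2) / 2)

/-- The standard normal upper tail function `Φ̄`. -/
noncomputable def Phibar (s : ℝ) : ℝ := ∫ x in Set.Ioi s, stdphi x

/-- The inverse of `Φ̄` (as the generalized inverse). -/
noncomputable def PhibarInv (y : ℝ) : ℝ := sInf {x : ℝ | Phibar x ≤ y}

/-- The upper tail function `Ḡ(s) = ∫_s^∞ g`. -/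
noncomputable def Gbar (g : ℝ → ℝ) (s : ℝ) : ℝ := ∫ x in Set.Ioi s, g x

/-- The ℓ-value `ℓ(x; w, g)`. -/
noncomputable def lval (g : ℝ → ℝ) (w x : ℝ) : ℝ :=
  ((1 - w) * stdphi x) / ((1 - w) * stdphi x + w * g x)

/-- The q-value `q(x; w, g)`. -/
noncomputable def qval (g : ℝ → ℝ) (w x : ℝ) : ℝ :=
  ((1 - w) * Phibar |x|) / ((1 - w) * Phibar |x| + w * Gbar g |x|)

/-- `r(w,t) = wt/((1−w)(1−t))`. -/
noncomputable def rwt (w t : ℝ) : ℝ := w * t / ((1 - w) * (1 - t))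

/-- `β(x) = g(x)/φ(x) − 1`. -/
noncomputable def betaf (g : ℝ → ℝ) (x : ℝ) : ℝ := g x / stdphi x - 1

/-- `m̃(w) = −E₀[β(X,w)]`, the minus-expectation of the score at a null coordinate. -/
noncomputable def mtilde (g : ℝ → ℝ) (w : ℝ) : ℝ :=
  -∫ x, betaf g x / (1 + w * betaf g x) * stdphi x

/-- `m₁(μ,w) = E_μ[β(X,w)]` where `X ~ N(μ,1)`. -/
noncomputable def m1 (g : ℝ → ℝ) (μ w : ℝ) : ℝ :=
  ∫ x, betaf g x / (1 + w * betaf g x) * stdphi (x - μ)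


lemma stdphi_pos (x : ℝ) : 0 < stdphi x := by
  unfold stdphi
  positivity

lemma stdphi_cont : Continuous stdphi := by
  unfold stdphi
  continuity

lemma stdphi_integrable : Integrable stdphi := by
  have h : Integrable (fun x : ℝ => Real.exp (-(1/2 : ℝ) * x ^ 2)) :=
    integrable_exp_neg_mul_sq (by norm_num)
  have := h.const_mul (Real.sqrt (2 * Real.pi))⁻¹
  refine this.congr ?_
  filter_upwards with x
  unfold stdphi
  ring_nf

lemma stdphi_le_one (x : ℝ) : stdphi x ≤ 1 := by
  unfold stdphi
  have h1 : (1:ℝ) ≤ Real.sqrt (2 * Real.pi) := by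
    rw [show (1:ℝ) = Real.sqrt 1 by simp]
    exact Real.sqrt_le_sqrt (by nlinarith [Real.pi_gt_three])
  have h2 : Real.exp (-(x ^ 2) / 2) ≤ 1 := by
    rw [Real.exp_le_one_iff]; nlinarith [sq_nonneg x]
  have h3 : (Real.sqrt (2 * Real.pi))⁻¹ ≤ 1 := by
    rw [inv_le_one_iff₀]; right; exact h1
  nlinarith [Real.exp_pos (-(x^2)/2), inv_nonneg.2 (Real.sqrt_nonneg (2*Real.pi))]

lemma stdphi_le_exp (x : ℝ) : stdphi x ≤ Real.exp (-(x ^ 2) / 2) := by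
  unfold stdphi
  have h1 : (1:ℝ) ≤ Real.sqrt (2 * Real.pi) := by
    rw [show (1:ℝ) = Real.sqrt 1 by simp]
    exact Real.sqrt_le_sqrt (by nlinarith [Real.pi_gt_three])
  have h3 : (Real.sqrt (2 * Real.pi))⁻¹ ≤ 1 := by
    rw [inv_le_one_iff₀]; right; exact h1
  nlinarith [Real.exp_pos (-(x^2)/2), inv_nonneg.2 (Real.sqrt_nonneg (2*Real.pi))]

lemma stdphi_anti {a b : ℝ} (ha : 0 ≤ a) (hab : a ≤ b) : stdphi b ≤ stdphi a := by
  unfold stdphi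
  have : Real.exp (-(b ^ 2) / 2) ≤ Real.exp (-(a ^ 2) / 2) := by
    apply Real.exp_le_exp.2; nlinarith
  have h0 : (0:ℝ) ≤ (Real.sqrt (2 * Real.pi))⁻¹ := by positivity
  nlinarith

section split
variable {f : ℝ → ℝ}

lemma tail_split (hf : Integrable f) {a b : ℝ} (hab : a ≤ b) :
    ∫ x in Set.Ioi a, f x = (∫ x in Set.Ioc a b, f x) + ∫ x in Set.Ioi b, f x := by
  rw [← Set.Ioc_union_Ioi_eq_Ioi hab]
  exact setIntegral_union Set.Ioc_disjoint_Ioi_same measurableSet_Ioi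
    hf.integrableOn hf.integrableOn

lemma tail_antitone (hf : Integrable f) (hf0 : ∀ x, 0 ≤ f x) {a b : ℝ} (hab : a ≤ b) :
    ∫ x in Set.Ioi b, f x ≤ ∫ x in Set.Ioi a, f x := by
  rw [tail_split hf hab]
  have : 0 ≤ ∫ x in Set.Ioc a b, f x :=
    setIntegral_nonneg measurableSet_Ioc (fun x _ => hf0 x)
  linarith

lemma tail_le_total (hf : Integrable f) (hf0 : ∀ x, 0 ≤ f x) (a : ℝ) :
    ∫ x in Set.Ioi a, f x ≤ ∫ x, f x := by
  exact setIntegral_le_integral hf (Filter.Eventually.of_forall hf0)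

lemma interval_pos (hf : Integrable f) (hfc : Continuous f) (hf0 : ∀ x, 0 < f x)
    {a b : ℝ} (hab : a < b) : 0 < ∫ x in Set.Ioc a b, f x := by
  rw [setIntegral_pos_iff_support_of_nonneg_ae
    (Filter.Eventually.of_forall (fun x => (hf0 x).le)) hf.integrableOn]
  have : Function.support f ∩ Set.Ioc a b = Set.Ioc a b := by
    ext x; simp [Function.support, (hf0 x).ne']
  rw [this, Real.volume_Ioc]
  simp [hab]

lemma tail_pos (hf : Integrable f) (hfc : Continuous f) (hf0 : ∀ x, 0 < f x) (a : ℝ) :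
    0 < ∫ x in Set.Ioi a, f x := by
  have h1 := interval_pos hf hfc hf0 (lt_add_one a)
  have h2 : (0:ℝ) ≤ ∫ x in Set.Ioi (a+1), f x :=
    setIntegral_nonneg measurableSet_Ioi (fun x _ => (hf0 x).le)
  rw [tail_split hf (le_of_lt (lt_add_one a))]
  linarith

end split

lemma Phibar_strictAnti : StrictAnti Phibar := by
  intro a b hab
  unfold Phibar
  rw [tail_split stdphi_integrable hab.le]
  have := interval_pos stdphi_integrable stdphi_cont stdphi_pos hab
  linarith

lemma Phibar_pos (a : ℝ) : 0 < Phibar a :=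
  tail_pos stdphi_integrable stdphi_cont stdphi_pos a

lemma Phibar_antitone : Antitone Phibar := Phibar_strictAnti.antitone


-- upper bound: Phibar s ≤ stdphi s / s for s > 0
lemma xphi_deriv (x : ℝ) : HasDerivAt (fun y : ℝ => -Real.exp (-(y^2)/2))
    (x * Real.exp (-(x^2)/2)) x := by
  have h1 : HasDerivAt (fun y : ℝ => -(y^2)/2) (-x) x := by
    have := ((hasDerivAt_pow 2 x).neg).div_const 2
    simpa using this.congr_deriv (by ring)
  have h2 := (h1.exp).neg
  exact h2.congr_deriv (by ring)

lemma expsq_cont : Continuous (fun y : ℝ => -Real.exp (-(y^2)/2)) := by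
  exact (Real.continuous_exp.comp (((continuous_pow 2).neg).div_const 2)).neg

lemma xphi_tendsto : Filter.Tendsto (fun y : ℝ => -Real.exp (-(y^2)/2))
    Filter.atTop (nhds 0) := by
  rw [show (0:ℝ) = -0 by ring]
  apply Filter.Tendsto.neg
  apply Real.tendsto_exp_atBot.comp
  apply Filter.Tendsto.atBot_div_const (by norm_num : (0:ℝ) < 2)
  have h1 : Filter.Tendsto (fun y : ℝ => y^2) Filter.atTop Filter.atTop :=
    tendsto_pow_atTop two_ne_zero
  exact tendsto_neg_atTop_atBot.comp h1

lemma xphi_integrableOn (s : ℝ) (hs : 0 < s) :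
    IntegrableOn (fun x : ℝ => x * Real.exp (-(x^2)/2)) (Set.Ioi s) := by
  apply integrableOn_Ioi_deriv_of_nonneg expsq_cont.continuousWithinAt
    (fun x _ => xphi_deriv x) ?_ xphi_tendsto
  intro x hx
  have : (0:ℝ) < x := lt_trans hs hx
  positivity

lemma xphi_integral (s : ℝ) (hs : 0 < s) :
    ∫ x in Set.Ioi s, x * Real.exp (-(x^2)/2) = Real.exp (-(s^2)/2) := by
  rw [integral_Ioi_of_hasDerivAt_of_tendsto expsq_cont.continuousWithinAt
    (fun x _ => xphi_deriv x) (xphi_integrableOn s hs) xphi_tendsto]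
  ring

lemma Phibar_le (s : ℝ) (hs : 0 < s) : Phibar s ≤ stdphi s / s := by
  have key : Phibar s ≤ ∫ x in Set.Ioi s, (x / s) * stdphi x := by
    unfold Phibar
    apply setIntegral_mono_on stdphi_integrable.integrableOn ?_ measurableSet_Ioi
    · intro x hx
      have hx' : s < x := hx
      have h1 : (1:ℝ) ≤ x / s := (le_div_iff₀ hs).2 (by linarith)
      nlinarith [stdphi_pos x]
    · have : IntegrableOn (fun x : ℝ => ((Real.sqrt (2*Real.pi))⁻¹ / s) * (x * Real.exp (-(x^2)/2))) (Set.Ioi s) :=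
        (xphi_integrableOn s hs).const_mul _
      refine this.congr_fun ?_ measurableSet_Ioi
      intro x _
      unfold stdphi
      ring
  have h2 : ∫ x in Set.Ioi s, (x / s) * stdphi x = stdphi s / s := by
    have : ∀ x : ℝ, (x / s) * stdphi x = ((Real.sqrt (2*Real.pi))⁻¹ / s) * (x * Real.exp (-(x^2)/2)) := by
      intro x; unfold stdphi; ring
    rw [show (fun x : ℝ => (x / s) * stdphi x) = fun x : ℝ => ((Real.sqrt (2*Real.pi))⁻¹ / s) * (x * Real.exp (-(x^2)/2)) from funext this]
    rw [MeasureTheory.integral_const_mul, xphi_integral s hs]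
    unfold stdphi
    ring
  linarith [key, h2.le, h2.ge]

lemma interval_const_le {f : ℝ → ℝ} (hf : Integrable f) {a b c : ℝ} (hab : a ≤ b)
    (hc : ∀ x ∈ Set.Ioc a b, c ≤ f x) :
    (b - a) * c ≤ ∫ x in Set.Ioc a b, f x := by
  have h1 : ∫ x in Set.Ioc a b, (fun _ : ℝ => c) x ≤ ∫ x in Set.Ioc a b, f x := by
    apply setIntegral_mono_on ?_ hf.integrableOn measurableSet_Ioc hc
    exact integrableOn_const (by rw [Real.volume_Ioc]; exact ENNReal.ofReal_ne_top)
  rw [setIntegral_const, measureReal_def, Real.volume_Ioc, ENNReal.toReal_ofReal (by linarith)] at h1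
  simpa using h1

lemma tail_ge_interval {f : ℝ → ℝ} (hf : Integrable f) (hf0 : ∀ x, 0 ≤ f x) {a b : ℝ}
    (hab : a ≤ b) : ∫ x in Set.Ioc a b, f x ≤ ∫ x in Set.Ioi a, f x := by
  rw [tail_split hf hab]
  have : (0:ℝ) ≤ ∫ x in Set.Ioi b, f x :=
    setIntegral_nonneg measurableSet_Ioi (fun x _ => hf0 x)
  linarith

lemma Phibar_ge (t : ℝ) (ht : 1 ≤ t) : Real.exp (-2) * stdphi t / t ≤ Phibar t := by
  have ht0 : 0 < t := by linarith
  have hstep : ∀ x ∈ Set.Ioc t (t + 1/t), Real.exp (-2) * stdphi t ≤ stdphi x := by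
    intro x hx
    have hx1 : t < x := hx.1
    have hx2 : x ≤ t + 1/t := hx.2
    have h1 : stdphi (t + 1/t) ≤ stdphi x := stdphi_anti (by linarith) hx2
    have h2 : Real.exp (-2) * stdphi t ≤ stdphi (t + 1/t) := by
      unfold stdphi
      rw [show Real.exp (-2) * ((Real.sqrt (2*Real.pi))⁻¹ * Real.exp (-(t^2)/2))
        = (Real.sqrt (2*Real.pi))⁻¹ * Real.exp (-(t^2)/2 + -2) by rw [Real.exp_add]; ring]
      have hcoef : (0:ℝ) < (Real.sqrt (2*Real.pi))⁻¹ := by positivity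
      have hexp : Real.exp (-(t^2)/2 + -2) ≤ Real.exp (-((t + 1/t)^2)/2) := by
        apply Real.exp_le_exp.2
        have h3 : (1:ℝ)/(2*t^2) ≤ 1/2 := by
          apply div_le_div_of_nonneg_left (by norm_num) (by norm_num) ?_
          nlinarith
        have hexpand : -((t + 1/t)^2)/2 = -(t^2)/2 - 1 - 1/(2*t^2) := by
          field_simp; ring
        rw [hexpand]; linarith
      nlinarith
    linarith
  have key := interval_const_le stdphi_integrable (by linarith [one_div_pos.2 ht0] : t ≤ t + 1/t) hstep
  have h4 : (t + 1/t - t) * (Real.exp (-2) * stdphi t) = Real.exp (-2) * stdphi t / t := by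
    field_simp
    ring
  have h5 := tail_ge_interval stdphi_integrable (fun x => (stdphi_pos x).le)
    (by linarith [one_div_pos.2 ht0] : t ≤ t + 1/t)
  unfold Phibar
  rw [h4] at key
  linarith

lemma PhibarInv_le {y c : ℝ} (hc : 0 ≤ c) (h : Phibar c ≤ y) : PhibarInv y ≤ c := by
  unfold PhibarInv
  by_cases hb : BddBelow {x : ℝ | Phibar x ≤ y}
  · exact csInf_le hb h
  · rw [Real.sInf_of_not_bddBelow hb]; exact hc

lemma exists_Phibar_le {y : ℝ} (hy : 0 < y) : ∃ x : ℝ, Phibar x ≤ y := by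
  refine ⟨max 1 (1/y), ?_⟩
  have hx1 : (1:ℝ) ≤ max 1 (1/y) := le_max_left _ _
  have hx0 : (0:ℝ) < max 1 (1/y) := by linarith
  have h1 := Phibar_le _ hx0
  have h2 : stdphi (max 1 (1/y)) / (max 1 (1/y)) ≤ 1 / (max 1 (1/y)) := by
    gcongr
    exact stdphi_le_one _
  have h3 : 1 / max 1 (1/y) ≤ y := by
    rw [div_le_iff₀ hx0]
    have := le_max_right 1 (1/y)
    calc (1:ℝ) = y * (1/y) := by field_simp
    _ ≤ y * max 1 (1/y) := by nlinarith
  linarith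

lemma le_PhibarInv {y t : ℝ} (hy : 0 < y) (h : y ≤ Phibar t) : t ≤ PhibarInv y := by
  unfold PhibarInv
  apply le_csInf (exists_Phibar_le hy)
  intro x hx
  by_contra hlt
  push_neg at hlt
  have h2 := Phibar_strictAnti hlt
  have hx' : Phibar x ≤ y := hx
  linarith

section gsec
variable {g : ℝ → ℝ} {Λ : ℝ}

lemma g_integrable (hdens : ∫ x, g x = 1) : Integrable g := by
  by_contra h
  rw [MeasureTheory.integral_undef h] at hdens
  norm_num at hdens

lemma log_g_lipschitz (hpos : ∀ x, 0 < g x) (hdiff : Differentiable ℝ g)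
    (hΛ : 0 < Λ) (hlip : ∀ x : ℝ, |deriv (fun y => Real.log (g y)) x| ≤ Λ)
    (a b : ℝ) : |Real.log (g b) - Real.log (g a)| ≤ Λ * |b - a| := by
  have hdiff' : Differentiable ℝ (fun y => Real.log (g y)) :=
    fun x => ((hdiff x).log (hpos x).ne')
  have hL : LipschitzWith Λ.toNNReal (fun y => Real.log (g y)) := by
    apply lipschitzWith_of_nnnorm_deriv_le hdiff'
    intro x
    rw [← NNReal.coe_le_coe, coe_nnnorm, Real.norm_eq_abs, Real.coe_toNNReal _ hΛ.le]
    exact hlip x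
  have := hL.dist_le_mul b a
  rw [Real.dist_eq, Real.dist_eq, Real.coe_toNNReal _ hΛ.le] at this
  exact this

lemma g_exp_lb (hpos : ∀ x, 0 < g x) (hdiff : Differentiable ℝ g)
    (hΛ : 0 < Λ) (hlip : ∀ x : ℝ, |deriv (fun y => Real.log (g y)) x| ≤ Λ)
    {a b : ℝ} (hab : a ≤ b) : g a * Real.exp (-(Λ * (b - a))) ≤ g b := by
  have h := log_g_lipschitz hpos hdiff hΛ hlip a b
  rw [abs_of_nonneg (by linarith : (0:ℝ) ≤ b - a)] at h
  have h2 : Real.log (g a) - Λ * (b - a) ≤ Real.log (g b) := by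
    have := abs_le.1 h
    linarith [this.1]
  calc g a * Real.exp (-(Λ * (b - a)))
      = Real.exp (Real.log (g a) - Λ * (b - a)) := by
        rw [Real.exp_sub, Real.exp_log (hpos a), Real.exp_neg]; ring
    _ ≤ Real.exp (Real.log (g b)) := Real.exp_le_exp.2 h2
    _ = g b := Real.exp_log (hpos b)

lemma Gbar_ge (hpos : ∀ x, 0 < g x) (hdiff : Differentiable ℝ g) (hdens : ∫ x, g x = 1)
    (hΛ : 0 < Λ) (hlip : ∀ x : ℝ, |deriv (fun y => Real.log (g y)) x| ≤ Λ)
    (s : ℝ) : Real.exp (-Λ) * g s ≤ Gbar g s := by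
  have hint := g_integrable hdens
  have hstep : ∀ x ∈ Set.Ioc s (s+1), Real.exp (-Λ) * g s ≤ g x := by
    intro x hx
    have h1 := g_exp_lb hpos hdiff hΛ hlip (le_of_lt hx.1)
    have h2 : Real.exp (-(Λ * (x - s))) ≥ Real.exp (-Λ) := by
      apply Real.exp_le_exp.2
      have hxs : x - s ≤ 1 := by linarith [hx.2]
      nlinarith [hΛ.le]
    nlinarith [hpos s, Real.exp_pos (-(Λ * (x - s)))]
  have key := interval_const_le hint (by linarith : s ≤ s + 1) hstep
  have h5 := tail_ge_interval hint (fun x => (hpos x).le) (by linarith : s ≤ s + 1)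
  unfold Gbar
  have : (s + 1 - s) * (Real.exp (-Λ) * g s) = Real.exp (-Λ) * g s := by ring
  linarith [this ▸ key]

lemma Gbar_pos (hpos : ∀ x, 0 < g x) (hdiff : Differentiable ℝ g) (hdens : ∫ x, g x = 1)
    (s : ℝ) : 0 < Gbar g s :=
  tail_pos (g_integrable hdens) hdiff.continuous hpos s

lemma Gbar_le_one (hpos : ∀ x, 0 < g x) (hdens : ∫ x, g x = 1) (s : ℝ) : Gbar g s ≤ 1 := by
  have := tail_le_total (g_integrable hdens) (fun x => (hpos x).le) s
  rw [hdens] at this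
  exact this

lemma Gbar_antitone (hpos : ∀ x, 0 < g x) (hdens : ∫ x, g x = 1) {a b : ℝ} (hab : a ≤ b) :
    Gbar g b ≤ Gbar g a :=
  tail_antitone (g_integrable hdens) (fun x => (hpos x).le) hab

end gsec

lemma ratio_strict_mono {g : ℝ → ℝ}
    (hpos : ∀ x, 0 < g x) (hdiff : Differentiable ℝ g) (hdens : ∫ x, g x = 1)
    (hinc : StrictMonoOn (fun x => g x / stdphi x) (Set.Ici 0))
    {a b : ℝ} (ha : 0 ≤ a) (hab : a < b) :
    Phibar b * Gbar g a < Phibar a * Gbar g b := by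
  have hint := g_integrable hdens
  set r := g b / stdphi b with hr
  have hb0 : (0:ℝ) ≤ b := by linarith
  -- A := ∫_{Ioc a b} stdphi
  have hA : 0 < ∫ x in Set.Ioc a b, stdphi x :=
    interval_pos stdphi_integrable stdphi_cont stdphi_pos hab
  -- B ≤ r * A
  have hrstdphi : Integrable (fun x => r * stdphi x) := stdphi_integrable.const_mul r
  have hB : (∫ x in Set.Ioc a b, g x) ≤ ∫ x in Set.Ioc a b, r * stdphi x := by
    apply setIntegral_mono_on hint.integrableOn hrstdphi.integrableOn measurableSet_Ioc
    intro x hx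
    have hx0 : (0:ℝ) ≤ x := le_trans ha hx.1.le
    have hmono : g x / stdphi x ≤ r := by
      rcases eq_or_lt_of_le hx.2 with he | hl
      · rw [he]
      · exact (hinc (Set.mem_Ici.2 hx0) (Set.mem_Ici.2 hb0) hl).le
    have := stdphi_pos x
    calc g x = (g x / stdphi x) * stdphi x := by field_simp
    _ ≤ r * stdphi x := by nlinarith
  have hBA : (∫ x in Set.Ioc a b, g x) ≤ r * ∫ x in Set.Ioc a b, stdphi x := by
    rwa [MeasureTheory.integral_const_mul] at hB
  -- D := Gbar b - r * Phibar b > 0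
  have hD : 0 < Gbar g b - r * Phibar b := by
    have hsub : Integrable (fun x => g x - r * stdphi x) := hint.sub hrstdphi
    have hpos' : ∀ x ∈ Set.Ioi b, 0 < g x - r * stdphi x := by
      intro x hx
      have hx' : b < x := hx
      have := hinc (Set.mem_Ici.2 hb0) (Set.mem_Ici.2 (by linarith : (0:ℝ) ≤ x)) hx'
      have hphix := stdphi_pos x
      have : r < g x / stdphi x := this
      calc (0:ℝ) < (g x / stdphi x - r) * stdphi x := by nlinarith
      _ = g x - r * stdphi x := by field_simp
    have hI : 0 < ∫ x in Set.Ioi b, (g x - r * stdphi x) := by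
      rw [setIntegral_pos_iff_support_of_nonneg_ae ?_ hsub.integrableOn]
      · have hss : Set.Ioi b ⊆ Function.support (fun x => g x - r * stdphi x) ∩ Set.Ioi b := by
          intro x hx
          exact ⟨ne_of_gt (hpos' x hx), hx⟩
        calc (0:ℝ≥0∞) < volume (Set.Ioi b) := by simp
        _ ≤ _ := measure_mono hss
      · filter_upwards [MeasureTheory.ae_restrict_mem measurableSet_Ioi] with x hx
        exact (hpos' x hx).le
    have heq : ∫ x in Set.Ioi b, (g x - r * stdphi x)
        = Gbar g b - r * Phibar b := by
      rw [MeasureTheory.integral_sub hint.integrableOn hrstdphi.integrableOn,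
        MeasureTheory.integral_const_mul]
      rfl
    linarith [heq ▸ hI]
  have hPa : Phibar a = (∫ x in Set.Ioc a b, stdphi x) + Phibar b :=
    tail_split stdphi_integrable hab.le
  have hGa : Gbar g a = (∫ x in Set.Ioc a b, g x) + Gbar g b :=
    tail_split hint hab.le
  have hPb := Phibar_pos b
  have hBnn : 0 ≤ ∫ x in Set.Ioc a b, g x :=
    setIntegral_nonneg measurableSet_Ioc (fun x _ => (hpos x).le)
  rw [hPa, hGa]
  nlinarith [mul_le_mul_of_nonneg_right hBA hPb.le, mul_pos hA hD]


set_option maxHeartbeats 1000000 in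
/-- **Lemma (bounds on the threshold `χ`).** Let `g` be a positive symmetric differentiable
density, decreasing near `+∞`, with `|(log g)'| ≤ Λ`, `Ḡ(y) ≍ g(y)y^{κ−1}` as `y → ∞`
(`κ ∈ [1,2]`), `(1+y²)g(y)` bounded, and `g/φ` increasing on `[0,∞)` from `(g/φ)(0) < 1` to
`∞`. Let `χ = (Φ̄/Ḡ)⁻¹`. Then:
(i) for all `u ∈ (0,1]`, `χ(u) ≥ Φ̄⁻¹(u·Ḡ(Φ̄⁻¹(u)))`;
(ii) for `u` small enough,
`χ(u) ≤ Φ̄⁻¹(u·Ḡ((−2 log u + 4Λ(−log u)^{1/2} + C)^{1/2}))` with `C = −2 log g(0) − log(2π)`;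
(iii) for some `C' > 0` and `u` small enough,
`χ(u) ≥ (−2 log(u·Ḡ(Φ̄⁻¹(u))) − log log(1/u) − C')^{1/2}`. -/
theorem chi_threshold_bounds
    (g : ℝ → ℝ) (Λ κ : ℝ)
    (hpos : ∀ x, 0 < g x) (hsymm : ∀ x, g (-x) = g x)
    (hdiff : Differentiable ℝ g) (hdens : ∫ x, g x = 1)
    (hdec : ∃ M : ℝ, StrictAntiOn g (Set.Ici M))
    (hΛ : 0 < Λ) (hlip : ∀ x : ℝ, |deriv (fun y => Real.log (g y)) x| ≤ Λ)
    (hκ : κ ∈ Set.Icc (1 : ℝ) 2)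
    (htail : ∃ c C : ℝ, 0 < c ∧ 0 < C ∧ ∃ y₀ : ℝ, ∀ y ≥ y₀,
      c * (g y * y ^ (κ - 1)) ≤ Gbar g y ∧ Gbar g y ≤ C * (g y * y ^ (κ - 1)))
    (hbdd : ∃ M : ℝ, ∀ y : ℝ, (1 + y ^ 2) * g y ≤ M)
    (hinc : StrictMonoOn (fun x => g x / stdphi x) (Set.Ici 0))
    (h0 : g 0 / stdphi 0 < 1)
    (hinf : Filter.Tendsto (fun x => g x / stdphi x) Filter.atTop Filter.atTop)
    (χ : ℝ → ℝ)
    (hχ : ∀ u : ℝ, 0 < u → u ≤ 1 → 0 ≤ χ u ∧ Phibar (χ u) = u * Gbar g (χ u)) :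
    (∀ u : ℝ, 0 < u → u ≤ 1 → PhibarInv (u * Gbar g (PhibarInv u)) ≤ χ u) ∧
      (∃ u₀ : ℝ, 0 < u₀ ∧ u₀ ≤ 1 ∧ ∀ u : ℝ, 0 < u → u ≤ u₀ →
        χ u ≤ PhibarInv (u * Gbar g (Real.sqrt
          (-2 * Real.log u + 4 * Λ * Real.sqrt (-Real.log u) +
            (-2 * Real.log (g 0) - Real.log (2 * Real.pi)))))) ∧
      (∃ C' : ℝ, 0 < C' ∧ ∃ u₁ : ℝ, 0 < u₁ ∧ u₁ ≤ 1 ∧ ∀ u : ℝ, 0 < u → u ≤ u₁ →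
        Real.sqrt (-2 * Real.log (u * Gbar g (PhibarInv u)) -
          Real.log (Real.log (1 / u)) - C') ≤ χ u) := by
  have part1 : ∀ u : ℝ, 0 < u → u ≤ 1 → PhibarInv (u * Gbar g (PhibarInv u)) ≤ χ u := by
    intro u hu hu1
    obtain ⟨hc0, hceq⟩ := hχ u hu hu1
    have hG1 : Gbar g (χ u) ≤ 1 := Gbar_le_one hpos hdens _
    have hPc : Phibar (χ u) ≤ u := by rw [hceq]; nlinarith
    have hp : PhibarInv u ≤ χ u := PhibarInv_le hc0 hPc
    have hGm : Gbar g (χ u) ≤ Gbar g (PhibarInv u) := Gbar_antitone hpos hdens hp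
    apply PhibarInv_le hc0
    rw [hceq]
    nlinarith
  refine ⟨part1, ?_, ?_⟩
  · -- part (ii)
    set C : ℝ := -2 * Real.log (g 0) - Real.log (2 * Real.pi) with hCdef
    set K : ℝ := |C| + 4 * Λ + 4 + 10 with hKdef
    have hCa := le_abs_self C
    have hCb := neg_abs_le C
    have hK10 : 10 ≤ K := by
      have := abs_nonneg C; rw [hKdef]; linarith
    have hKC : |C| ≤ K := by rw [hKdef]; linarith
    have hKΛ : 4 * Λ + 4 ≤ K := by rw [hKdef]; linarith [abs_nonneg C]
    clear_value C
    clear_value K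
    have hu₀1 : Real.exp (-(K^2)) ≤ 1 := Real.exp_le_one_iff.2 (by nlinarith)
    refine ⟨Real.exp (-(K^2)), Real.exp_pos _, hu₀1, ?_⟩
    intro u hu hu0
    have hu1 : u ≤ 1 := le_trans hu0 hu₀1
    set x : ℝ := Real.sqrt (-Real.log u) with hxdef
    have hL : K^2 ≤ -Real.log u := by
      have h := Real.log_le_log hu hu0
      rw [Real.log_exp] at h; linarith
    have hL0 : (0:ℝ) ≤ -Real.log u := le_trans (by positivity) hL
    have hx2 : x^2 = -Real.log u := by rw [hxdef]; exact Real.sq_sqrt hL0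
    have hxK : K ≤ x := by
      rw [hxdef, show K = Real.sqrt (K^2) from (Real.sqrt_sq (by linarith)).symm]
      exact Real.sqrt_le_sqrt hL
    clear_value x
    set A : ℝ := -2 * Real.log u + 4 * Λ * x + C with hAdef
    have hlogu : Real.log u = -x^2 := by linarith
    have hA1 : 1 ≤ A := by rw [hAdef, hlogu]; nlinarith
    have hAeq : A = 2*x^2 + 4*Λ*x + C := by rw [hAdef, hlogu]; ring
    clear_value A
    set s : ℝ := Real.sqrt A with hsdef
    have hs2 : s^2 = A := by rw [hsdef]; exact Real.sq_sqrt (by linarith)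
    have hs1 : 1 ≤ s := by
      rw [hsdef]; exact (Real.le_sqrt (by norm_num) (by linarith)).2 (by nlinarith)
    have hs0 : (0:ℝ) < s := by linarith
    have hs2x : s + 1 ≤ 2 * x := by
      have h1 : A ≤ (2*x - 1)^2 := by rw [hAeq]; nlinarith
      have h2 : s ≤ 2*x - 1 := by
        rw [hsdef, show 2*x-1 = Real.sqrt ((2*x-1)^2) from (Real.sqrt_sq (by nlinarith)).symm]
        exact Real.sqrt_le_sqrt h1
      linarith
    clear_value s
    have hg0 := hpos 0
    have h2pi : Real.exp (Real.log (2*Real.pi)/2) = Real.sqrt (2*Real.pi) := by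
      rw [Real.sqrt_eq_rpow, Real.rpow_def_of_pos (by positivity)]; ring_nf
    have hsqrt2pi : (0:ℝ) < Real.sqrt (2*Real.pi) := by positivity
    have hstd : stdphi s = u * g 0 * Real.exp (-(2*Λ*x)) := by
      unfold stdphi
      rw [hs2]
      have harg : -A/2 = Real.log u + (-(2*Λ*x)) + (Real.log (g 0) + Real.log (2*Real.pi)/2) := by
        rw [hAdef, hCdef]; ring
      rw [show -A/2 = Real.log u + (-(2*Λ*x)) + (Real.log (g 0) + Real.log (2*Real.pi)/2) from harg,
        Real.exp_add, Real.exp_add, Real.exp_add, Real.exp_log hu, Real.exp_log hg0, h2pi]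
      field_simp
    have hPhis : Phibar s ≤ u * Gbar g s := by
      have h1 := Phibar_le s hs0
      have h2 : g 0 * Real.exp (-(Λ * (s - 0))) ≤ g s :=
        g_exp_lb hpos hdiff hΛ hlip (le_of_lt hs0)
      have h3 := Gbar_ge hpos hdiff hdens hΛ hlip s
      have hexp : Real.exp (-(2*Λ*x)) ≤ Real.exp (-(Λ*(s - 0))) * Real.exp (-Λ) := by
        rw [← Real.exp_add]; apply Real.exp_le_exp.2
        have := mul_le_mul_of_nonneg_left hs2x hΛ.le
        linarith
      have e1 : stdphi s / s ≤ u * g 0 * Real.exp (-(2*Λ*x)) := by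
        rw [hstd]
        exact div_le_self (mul_pos (mul_pos hu hg0) (Real.exp_pos _)).le hs1
      have e2 : u * g 0 * Real.exp (-(2*Λ*x))
          ≤ u * g 0 * (Real.exp (-(Λ * (s - 0))) * Real.exp (-Λ)) :=
        mul_le_mul_of_nonneg_left hexp (mul_pos hu hg0).le
      have e3 : u * g 0 * (Real.exp (-(Λ*(s-0))) * Real.exp (-Λ)) ≤ u * (Real.exp (-Λ) * g s) := by
        calc u * g 0 * (Real.exp (-(Λ*(s-0))) * Real.exp (-Λ))
            = (u * Real.exp (-Λ)) * (g 0 * Real.exp (-(Λ * (s - 0)))) := by ring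
        _ ≤ (u * Real.exp (-Λ)) * g s :=
            mul_le_mul_of_nonneg_left h2 (mul_pos hu (Real.exp_pos _)).le
        _ = u * (Real.exp (-Λ) * g s) := by ring
      have e4 : u * (Real.exp (-Λ) * g s) ≤ u * Gbar g s :=
        mul_le_mul_of_nonneg_left h3 hu.le
      linarith
    obtain ⟨hc0, hceq⟩ := hχ u hu hu1
    have hGs := Gbar_pos hpos hdiff hdens s
    have hGc := Gbar_pos hpos hdiff hdens (χ u)
    have hchis : χ u ≤ s := by
      by_contra hlt
      push_neg at hlt
      have hr := ratio_strict_mono hpos hdiff hdens hinc (by linarith : (0:ℝ) ≤ s) hlt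
      rw [hceq] at hr
      have := mul_le_mul_of_nonneg_right hPhis hGc.le
      nlinarith
    have hGm : u * Gbar g s ≤ Phibar (χ u) := by
      rw [hceq]
      exact mul_le_mul_of_nonneg_left (Gbar_antitone hpos hdens hchis) hu.le
    exact le_PhibarInv (mul_pos hu hGs) hGm
  · -- part (iii)
    set M : ℝ := Λ + |Real.log (g 0)| + 20 with hMdef
    have hM20 : 20 ≤ M := by rw [hMdef]; linarith [abs_nonneg (Real.log (g 0)), hΛ.le]
    have hMΛ : Λ ≤ M := by rw [hMdef]; linarith [abs_nonneg (Real.log (g 0))]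
    have hMg : |Real.log (g 0)| ≤ M := by rw [hMdef]; linarith [hΛ.le]
    clear_value M
    have hg0 := hpos 0
    have hu₁1 : Real.exp (-(M^2)) ≤ 1 := Real.exp_le_one_iff.2 (by linarith [sq_nonneg M])
    refine ⟨20, by norm_num, Real.exp (-(M^2)), Real.exp_pos _, hu₁1, ?_⟩
    intro u hu hu0
    have hu1 : u ≤ 1 := le_trans hu0 hu₁1
    set x : ℝ := Real.sqrt (-Real.log u) with hxdef
    have hL : M^2 ≤ -Real.log u := by
      have h := Real.log_le_log hu hu0
      rw [Real.log_exp] at h; linarith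
    have hL0 : (0:ℝ) ≤ -Real.log u := le_trans (by positivity) hL
    have hx2 : x^2 = -Real.log u := by rw [hxdef]; exact Real.sq_sqrt hL0
    have hxM : M ≤ x := by
      rw [hxdef, show M = Real.sqrt (M^2) from (Real.sqrt_sq (by linarith)).symm]
      exact Real.sqrt_le_sqrt hL
    clear_value x
    have hx20 : (20:ℝ) ≤ x := le_trans hM20 hxM
    have hxpos : (0:ℝ) < x := by linarith
    have hx2pos : (0:ℝ) < x^2 := by positivity
    have hΛx : Λ ≤ x := le_trans hMΛ hxM
    have hgabs : -x ≤ Real.log (g 0) := by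
      have := neg_abs_le (Real.log (g 0)); linarith [le_trans hMg hxM]
    have hlogu : Real.log u = -x^2 := by linarith
    -- p := PhibarInv u and its upper bound
    set p : ℝ := PhibarInv u with hpdef
    have hP2x : Phibar (2*x) ≤ u := by
      have ha := Phibar_le (2*x) (by linarith)
      have hb := stdphi_le_exp (2*x)
      have hc : Real.exp (-((2*x)^2)/2) ≤ u := by
        calc Real.exp (-((2*x)^2)/2) ≤ Real.exp (Real.log u) :=
          Real.exp_le_exp.2 (by rw [hlogu]; linarith [sq_nonneg x])
        _ = u := Real.exp_log hu
      have hd : stdphi (2*x) / (2*x) ≤ stdphi (2*x) :=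
        div_le_self (stdphi_pos _).le (by linarith)
      linarith
    have hp2x : p ≤ 2*x := PhibarInv_le (by linarith) hP2x
    set q : ℝ := max p 0 with hqdef
    have hpq : p ≤ q := le_max_left _ _
    have hq0 : (0:ℝ) ≤ q := le_max_right _ _
    have hq2x : q ≤ 2*x := max_le hp2x (by linarith)
    have hGp : g 0 * Real.exp (-(Λ*(2*x+1))) ≤ Gbar g p := by
      have c1 : Gbar g q ≤ Gbar g p := Gbar_antitone hpos hdens hpq
      have c2 : Real.exp (-Λ) * g q ≤ Gbar g q := Gbar_ge hpos hdiff hdens hΛ hlip q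
      have c3 : g 0 * Real.exp (-(Λ*(q-0))) ≤ g q := g_exp_lb hpos hdiff hΛ hlip hq0
      have c4 : Real.exp (-(Λ*(2*x))) ≤ Real.exp (-(Λ*(q-0))) := by
        apply Real.exp_le_exp.2
        have := mul_le_mul_of_nonneg_left hq2x hΛ.le
        linarith
      calc g 0 * Real.exp (-(Λ*(2*x+1)))
          = Real.exp (-Λ) * (g 0 * Real.exp (-(Λ*(2*x)))) := by
            rw [show -(Λ*(2*x+1)) = -Λ + -(Λ*(2*x)) by ring, Real.exp_add]; ring
      _ ≤ Real.exp (-Λ) * (g 0 * Real.exp (-(Λ*(q-0)))) :=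
          mul_le_mul_of_nonneg_left (mul_le_mul_of_nonneg_left c4 hg0.le) (Real.exp_pos _).le
      _ ≤ Real.exp (-Λ) * g q := mul_le_mul_of_nonneg_left c3 (Real.exp_pos _).le
      _ ≤ Gbar g q := c2
      _ ≤ Gbar g p := c1
    set v : ℝ := u * Gbar g p with hvdef
    have hGppos : 0 < Gbar g p := Gbar_pos hpos hdiff hdens p
    have hv0 : 0 < v := mul_pos hu hGppos
    have hvu : v ≤ u := by
      have h := mul_le_mul_of_nonneg_left (Gbar_le_one hpos hdens p) hu.le
      rw [mul_one] at h
      exact h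
    have hvlb : u * (g 0 * Real.exp (-(Λ*(2*x+1)))) ≤ v :=
      mul_le_mul_of_nonneg_left hGp hu.le
    have hlogv_ub : Real.log v ≤ -x^2 := by
      have := Real.log_le_log hv0 hvu; linarith
    have hlogv_lb : -x^2 + Real.log (g 0) + -(Λ*(2*x+1)) ≤ Real.log v := by
      have h := Real.log_le_log (mul_pos hu (mul_pos hg0 (Real.exp_pos _))) hvlb
      rw [Real.log_mul hu.ne' (by positivity), Real.log_mul hg0.ne' (Real.exp_ne_zero _),
        Real.log_exp, hlogu] at h
      linarith
    have hlog1u : Real.log (1/u) = x^2 := by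
      rw [one_div, Real.log_inv]; linarith
    set B : ℝ := -2 * Real.log v - Real.log (Real.log (1 / u)) - 20 with hBdef
    rw [hlog1u] at hBdef
    have hlogx2_ub : Real.log (x^2) ≤ x^2 - 1 := Real.log_le_sub_one_of_pos hx2pos
    have hx400 : (400:ℝ) ≤ x^2 := by
      calc (400:ℝ) = 20^2 := by norm_num
      _ ≤ x^2 := pow_le_pow_left₀ (by norm_num) hx20 2
    have hlogx2_nn : 0 ≤ Real.log (x^2) := Real.log_nonneg (by linarith [hx400])
    clear_value B
    have hx2x : 2*x ≤ x^2 := by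
      have h := mul_le_mul_of_nonneg_right hx20 (by linarith : (0:ℝ) ≤ x)
      linarith [h, hxpos.le]
    have hΛx2 : Λ*(2*x+1) ≤ x*(2*x+1) := mul_le_mul_of_nonneg_right hΛx (by linarith)
    have hxx : x*(2*x+1) = 2*x^2 + x := by ring
    have hBlb : x^2 - 19 ≤ B := by rw [hBdef]; linarith
    have hB1 : (1:ℝ) ≤ B := by linarith
    have hBub : B ≤ 9*x^2 := by rw [hBdef]; linarith
    set t : ℝ := Real.sqrt B with htdef
    have ht2 : t^2 = B := by rw [htdef]; exact Real.sq_sqrt (by linarith)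
    have ht1 : (1:ℝ) ≤ t := by
      rw [htdef]; exact (Real.le_sqrt (by norm_num) (by linarith)).2 (by linarith [hB1])
    have ht0 : (0:ℝ) < t := by linarith
    have ht3x : t ≤ 3*x := by
      rw [htdef, show 3*x = Real.sqrt ((3*x)^2) from (Real.sqrt_sq (by linarith)).symm]
      exact Real.sqrt_le_sqrt (by linarith [hBub])
    clear_value t
    -- value of stdphi t
    have hexpx : Real.exp (Real.log (x^2)/2) = x := by
      rw [show Real.log (x^2)/2 = Real.log (x^2) * (1/2) by ring,
        ← Real.rpow_def_of_pos hx2pos, ← Real.sqrt_eq_rpow, Real.sqrt_sq hxpos.le]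
    have hstdt : stdphi t = (Real.sqrt (2*Real.pi))⁻¹ * (v * (x * Real.exp 10)) := by
      unfold stdphi
      rw [ht2]
      rw [show -B/2 = Real.log v + (Real.log (x^2)/2 + 10) by rw [hBdef]; ring,
        Real.exp_add, Real.exp_add, Real.exp_log hv0, hexpx]
    have hsqrt2pi : (0:ℝ) < Real.sqrt (2*Real.pi) := by positivity
    have h9 : (9:ℝ) ≤ Real.exp 8 := by linarith [Real.add_one_le_exp 8]
    have hsq3 : Real.sqrt (2*Real.pi) ≤ 3 := by
      have h2pi9 : (2:ℝ)*Real.pi ≤ 9 := by linarith [Real.pi_le_four]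
      calc Real.sqrt (2*Real.pi) ≤ Real.sqrt 9 := Real.sqrt_le_sqrt h2pi9
      _ = 3 := by
          rw [show (9:ℝ) = 3^2 by norm_num, Real.sqrt_sq (by norm_num : (0:ℝ) ≤ 3)]
    have hinv3 : (1:ℝ)/3 ≤ (Real.sqrt (2*Real.pi))⁻¹ := by
      have := one_div_le_one_div_of_le hsqrt2pi hsq3
      rw [one_div (Real.sqrt (2*Real.pi))] at this
      exact this
    have hfrac : (3:ℝ) ≤ Real.exp 8 * (Real.sqrt (2*Real.pi))⁻¹ := by
      have := mul_le_mul h9 hinv3 (by norm_num) (by positivity)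
      linarith
    have hkey : v ≤ Phibar t := by
      have hPg := Phibar_ge t ht1
      have hsf : v ≤ Real.exp (-2) * stdphi t / t := by
        rw [hstdt, le_div_iff₀ ht0]
        have hexp8 : Real.exp 8 = Real.exp (-2) * Real.exp 10 := by
          rw [← Real.exp_add]; norm_num
        calc v * t ≤ v * (3*x) := mul_le_mul_of_nonneg_left ht3x hv0.le
        _ = (v*x) * 3 := by ring
        _ ≤ (v*x) * (Real.exp 8 * (Real.sqrt (2*Real.pi))⁻¹) :=
            mul_le_mul_of_nonneg_left hfrac (mul_pos hv0 hxpos).le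
        _ = Real.exp (-2) * ((Real.sqrt (2*Real.pi))⁻¹ * (v * (x * Real.exp 10))) := by
            rw [hexp8]; ring
      linarith
    have h1 := le_PhibarInv hv0 hkey
    have h2 := part1 u hu hu1
    rw [← hpdef, ← hvdef] at h2
    linarith
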